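/- Let q ≥ 2 and let P be a nonzero multivariate polynomial over the finite field F_q in n variables such that the total degree of P is at most d·ν and the degree of P in each individual variable is at most d, where d < q. If each variable is chosen independently and uniformly at random from F_q, then the probability that P evaluates to a nonzero value is at least (1 - d/q)^ν. -/

import Mathlib

lemma keyineq (q d k : ℕ) (hk : k ≤ d) (hdq : d < q) :
    ((1 : ℝ) - d / q) ^ k ≤ (((q : ℝ) - k) / q) ^ d := by
  have hq0 : (0:ℝ) < q := by exact_mod_cast (Nat.zero_le d).trans_lt hdq
  rcases Nat.eq_zero_or_pos d with hd | hd
  · obtain rfl : k = 0 := Nat.le_zero.mp (hd ▸ hk)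
    simp [hd]
  have hd0 : (0:ℝ) < d := by exact_mod_cast hd
  have hb0 : (0:ℝ) ≤ 1 - d / q := by
    rw [sub_nonneg, div_le_one hq0]; exact_mod_cast hdq.le
  have hw : (k:ℝ)/d + ((d:ℝ)-k)/d = 1 := by field_simp; ring
  have hgm := Real.geom_mean_le_arith_mean2_weighted
    (by positivity : (0:ℝ) ≤ (k:ℝ)/d)
    (by rw [le_div_iff₀ hd0, zero_mul, sub_nonneg]; exact_mod_cast hk)
    hb0 (zero_le_one) hw
  rw [Real.one_rpow, mul_one, mul_one] at hgm
  have harith : (k:ℝ)/d * (1 - d/q) + ((d:ℝ)-k)/d = ((q:ℝ) - k)/q := by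
    field_simp; ring
  rw [harith] at hgm
  have h1 : ((1:ℝ) - d/q) ^ (k:ℝ) ≤ (((q:ℝ) - k)/q) ^ (d:ℝ) :=
    calc ((1:ℝ) - d/q) ^ (k:ℝ) = (((1:ℝ) - d/q) ^ ((k:ℝ)/d)) ^ (d:ℝ) := by
          rw [← Real.rpow_mul hb0, div_mul_cancel₀ _ (ne_of_gt hd0)]
      _ ≤ (((q:ℝ) - k)/q) ^ (d:ℝ) :=
          Real.rpow_le_rpow (Real.rpow_nonneg hb0 _) hgm (by positivity)
  rw [← Real.rpow_natCast ((1:ℝ) - d/q) k, ← Real.rpow_natCast (((q:ℝ) - k)/q) d]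
  exact h1

open MvPolynomial in
lemma count_sum {K : Type*} [Field K] [Fintype K] [DecidableEq K] {n : ℕ}
    (P : MvPolynomial (Fin (n+1)) K) :
    (Finset.univ.filter fun x : Fin (n+1) → K => eval x P ≠ 0).card
      = ∑ s : Fin n → K,
        (Finset.univ.filter fun a : K => eval (Fin.cons a s) P ≠ 0).card := by
  rw [Finset.card_eq_sum_card_fiberwise
    (f := fun x : Fin (n+1) → K => Fin.tail x) (t := Finset.univ)
    (fun x _ => Finset.mem_univ _)]
  refine Finset.sum_congr rfl fun s _ => ?_
  refine Finset.card_bij' (fun x _ => x 0) (fun a _ => Fin.cons a s) ?_ ?_ ?_ ?_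
  · intro x hx
    simp only [Finset.mem_filter, Finset.mem_univ, true_and] at hx ⊢
    obtain ⟨h1, h2⟩ := hx
    rw [← h2]
    rwa [Fin.cons_self_tail]
  · intro a ha
    simp only [Finset.mem_filter, Finset.mem_univ, true_and] at ha ⊢
    refine ⟨ha, ?_⟩
    ext i; simp [Fin.tail_cons]
  · intro x hx
    simp only [Finset.mem_filter] at hx
    obtain ⟨-, h2⟩ := hx
    subst h2
    show Fin.cons (x 0) (Fin.tail x) = x
    exact Fin.cons_self_tail x
  · intro a ha
    simp

open MvPolynomial in
lemma main_ind {K : Type*} [Field K] [Fintype K] [DecidableEq K]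
    (q d : ℕ) (hq : Fintype.card K = q) (hdq : d < q) :
    ∀ (n : ℕ) (P : MvPolynomial (Fin n) K), P ≠ 0 → (∀ i, P.degreeOf i ≤ d) →
    ((1:ℝ) - d/q) ^ P.totalDegree
      ≤ (((Finset.univ.filter fun x : Fin n → K => eval x P ≠ 0).card : ℝ) / q ^ n) ^ d := by
  have hq0 : (0:ℝ) < q := by exact_mod_cast (Nat.zero_le d).trans_lt hdq
  have hb0 : (0:ℝ) ≤ 1 - d / q := by
    rw [sub_nonneg, div_le_one hq0]; exact_mod_cast hdq.le
  have hb1 : (1:ℝ) - d / q ≤ 1 := by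
    have : (0:ℝ) ≤ (d:ℝ)/q := by positivity
    linarith
  intro n
  induction n with
  | zero =>
    intro P hP hvar
    obtain ⟨c, rfl⟩ := MvPolynomial.C_surjective (Fin 0) P
    have hc : c ≠ 0 := fun h => hP (by rw [h, map_zero])
    have hfil : (Finset.univ.filter fun x : Fin 0 → K => eval x (C c : MvPolynomial (Fin 0) K) ≠ 0)
        = Finset.univ := by
      ext x; simp [hc]
    rw [hfil, totalDegree_C]
    have : (Finset.univ : Finset (Fin 0 → K)).card = 1 := by
      simp [Finset.card_univ]
    rw [this]
    norm_num
  | succ n IH =>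
    intro P hP hvar
    set Q := finSuccEquiv K n P with hQdef
    have hQ : Q ≠ 0 := by
      rw [hQdef]
      intro h
      exact hP (by rw [← (finSuccEquiv K n).symm_apply_apply P, h, map_zero])
    set k := Q.natDegree with hkdef
    have hkd : k ≤ d := by
      rw [hkdef, hQdef, natDegree_finSuccEquiv]; exact hvar 0
    have hkq : k ≤ q := hkd.trans hdq.le
    set Pk := Q.leadingCoeff with hPkdef
    have hPk0 : Pk ≠ 0 := Polynomial.leadingCoeff_ne_zero.mpr hQ
    have hcoeff : Q.coeff k = Pk := rfl
    have hvar' : ∀ j : Fin n, Pk.degreeOf j ≤ d := fun j => by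
      have := degreeOf_coeff_finSuccEquiv P j k
      rw [← hQdef, hcoeff] at this
      exact this.trans (hvar j.succ)
    have hDk : Pk.totalDegree + k ≤ P.totalDegree := by
      have := totalDegree_coeff_finSuccEquiv_add_le P k (by rw [← hQdef, hcoeff]; exact hPk0)
      rwa [← hQdef, hcoeff] at this
    have hIH := IH Pk hPk0 hvar'
    set N' := (Finset.univ.filter fun s : Fin n → K => eval s Pk ≠ 0).card with hN'
    -- inner bound
    have hinner : ∀ s : Fin n → K, eval s Pk ≠ 0 →
        q - k ≤ (Finset.univ.filter fun a : K => eval (Fin.cons a s) P ≠ 0).card := by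
      intro s hs
      set f := Q.map (eval s) with hf
      have hfk : f.coeff k = eval s Pk := by rw [hf, Polynomial.coeff_map, hcoeff]
      have hf0 : f ≠ 0 := fun h => hs (by rw [← hfk, h, Polynomial.coeff_zero])
      have hfd : f.natDegree ≤ k := by rw [hf, hkdef]; exact Polynomial.natDegree_map_le
      have heval : ∀ a : K, eval (Fin.cons a s) P = f.eval a := fun a => by
        rw [hf, hQdef]; exact eval_eq_eval_mv_eval' s a P
      have hroots : (Finset.univ.filter fun a : K => eval (Fin.cons a s) P = 0).card ≤ k := by
        calc (Finset.univ.filter fun a : K => eval (Fin.cons a s) P = 0).card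
            ≤ f.roots.toFinset.card := by
              apply Finset.card_le_card
              intro a ha
              simp only [Finset.mem_filter, Finset.mem_univ, true_and] at ha
              rw [Multiset.mem_toFinset, Polynomial.mem_roots hf0]
              rw [heval a] at ha
              exact ha
          _ ≤ Multiset.card f.roots := Multiset.toFinset_card_le _
          _ ≤ f.natDegree := Polynomial.card_roots' f
          _ ≤ k := hfd
      have hsplit := Finset.card_filter_add_card_filter_not
        (s := (Finset.univ : Finset K)) (p := fun a : K => eval (Fin.cons a s) P = 0)
      have hcardK : (Finset.univ : Finset K).card = q := by rw [Finset.card_univ, hq]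
      have : (Finset.univ.filter fun a : K => ¬ eval (Fin.cons a s) P = 0).card
          = (Finset.univ.filter fun a : K => eval (Fin.cons a s) P ≠ 0).card := rfl
      omega
    -- global count
    have hcount : N' * (q - k)
        ≤ (Finset.univ.filter fun x : Fin (n+1) → K => eval x P ≠ 0).card := by
      rw [count_sum P]
      calc N' * (q - k)
          ≤ ∑ s ∈ Finset.univ.filter (fun s : Fin n → K => eval s Pk ≠ 0),
              (Finset.univ.filter fun a : K => eval (Fin.cons a s) P ≠ 0).card := by
            have := Finset.card_nsmul_le_sum
              (Finset.univ.filter (fun s : Fin n → K => eval s Pk ≠ 0))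
              (fun s => (Finset.univ.filter fun a : K => eval (Fin.cons a s) P ≠ 0).card)
              (q - k)
              (fun s hs => hinner s (Finset.mem_filter.mp hs).2)
            simpa [mul_comm] using this
        _ ≤ ∑ s : Fin n → K,
              (Finset.univ.filter fun a : K => eval (Fin.cons a s) P ≠ 0).card :=
            Finset.sum_le_sum_of_subset (Finset.filter_subset _ _)
    -- real arithmetic
    set N := (Finset.univ.filter fun x : Fin (n+1) → K => eval x P ≠ 0).card with hN
    have hqk0 : (0:ℝ) ≤ (q:ℝ) - k := by
      rw [sub_nonneg]; exact_mod_cast hkq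
    have hNR : (N':ℝ) * ((q:ℝ) - k) ≤ (N:ℝ) := by
      have : ((N' * (q - k) : ℕ) : ℝ) ≤ (N:ℝ) := by exact_mod_cast hcount
      rwa [Nat.cast_mul, Nat.cast_sub hkq] at this
    calc ((1:ℝ) - d/q) ^ P.totalDegree
        ≤ ((1:ℝ) - d/q) ^ (Pk.totalDegree + k) := pow_le_pow_of_le_one hb0 hb1 hDk
      _ = ((1:ℝ) - d/q) ^ Pk.totalDegree * ((1:ℝ) - d/q) ^ k := pow_add _ _ _
      _ ≤ ((N':ℝ) / q ^ n) ^ d * (((q:ℝ) - k) / q) ^ d := by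
          apply mul_le_mul hIH (keyineq q d k hkd hdq) (pow_nonneg hb0 _)
          positivity
      _ = ((N':ℝ) * ((q:ℝ) - k) / q ^ (n+1)) ^ d := by
          rw [← mul_pow, div_mul_div_comm, pow_succ]
      _ ≤ ((N:ℝ) / q ^ (n+1)) ^ d := by
          apply pow_le_pow_left₀
            (div_nonneg (mul_nonneg (Nat.cast_nonneg _) hqk0) (by positivity))
          gcongr

/-- Schwartz–Zippel style bound: if a nonzero multivariate polynomial over a
finite field with `q` elements has total degree at most `d * ν` and degree at
most `d < q` in each individual variable, then the fraction of points where it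
is nonzero is at least `(1 - d/q)^ν`. -/
theorem stmt0 {K : Type*} [Field K] [Fintype K] [DecidableEq K]
    (q d ν n : ℕ) (hq : Fintype.card K = q) (hq2 : 2 ≤ q) (hdq : d < q)
    (P : MvPolynomial (Fin n) K) (hP : P ≠ 0)
    (hdeg : P.totalDegree ≤ d * ν)
    (hvar : ∀ i : Fin n, P.degreeOf i ≤ d) :
    ((Finset.univ.filter fun x : Fin n → K => MvPolynomial.eval x P ≠ 0).card : ℝ)
        / (q : ℝ) ^ n
      ≥ (1 - (d : ℝ) / q) ^ ν := by
  have hq0 : (0:ℝ) < q := by exact_mod_cast Nat.lt_of_lt_of_le Nat.zero_lt_two hq2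
  have hb0 : (0:ℝ) ≤ 1 - d / q := by
    rw [sub_nonneg, div_le_one hq0]; exact_mod_cast hdq.le
  have hb1 : (1:ℝ) - d / q ≤ 1 := by
    have : (0:ℝ) ≤ (d:ℝ)/q := by positivity
    linarith
  rw [ge_iff_le]
  rcases Nat.eq_zero_or_pos d with hd | hd
  · subst hd
    have hdeg0 : P.totalDegree = 0 := by
      rw [MvPolynomial.totalDegree_eq_zero_iff]
      intro m hm x
      exact Nat.le_zero.mp ((MvPolynomial.monomial_le_degreeOf x hm).trans (hvar x))
    have hPC : P = MvPolynomial.C (MvPolynomial.coeff 0 P) := by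
      ext m
      rcases eq_or_ne m 0 with rfl | hm
      · simp
      · rw [MvPolynomial.coeff_C, if_neg fun h => hm h.symm]
        by_contra hc
        exact hm (Finsupp.ext fun x =>
          (MvPolynomial.totalDegree_eq_zero_iff _ P).mp hdeg0 m
            (MvPolynomial.mem_support_iff.mpr hc) x)
    have hc0 : MvPolynomial.coeff 0 P ≠ 0 := fun h => hP (by rw [hPC, h, map_zero])
    have hfil : (Finset.univ.filter fun x : Fin n → K => MvPolynomial.eval x P ≠ 0)
        = Finset.univ := by
      ext x
      simp only [Finset.mem_filter, Finset.mem_univ, true_and, iff_true]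
      rw [hPC]
      simpa using hc0
    rw [hfil]
    have hcard : ((Finset.univ : Finset (Fin n → K)).card : ℝ) = (q:ℝ)^n := by
      rw [Finset.card_univ, Fintype.card_fun, hq, Fintype.card_fin]
      push_cast
      ring
    rw [hcard, div_self (by positivity)]
    simp
  · have hmain := main_ind q d hq hdq n P hP hvar
    have h1 : ((1:ℝ) - d/q) ^ (d * ν) ≤ ((1:ℝ) - d/q) ^ P.totalDegree :=
      pow_le_pow_of_le_one hb0 hb1 hdeg
    have h2 : (((1:ℝ) - d/q) ^ ν) ^ d
        ≤ (((Finset.univ.filter fun x : Fin n → K => MvPolynomial.eval x P ≠ 0).card : ℝ)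
            / (q:ℝ) ^ n) ^ d := by
      calc (((1:ℝ) - d/q) ^ ν) ^ d = ((1:ℝ) - d/q) ^ (d * ν) := by
            rw [← pow_mul, mul_comm]
        _ ≤ ((1:ℝ) - d/q) ^ P.totalDegree := h1
        _ ≤ _ := hmain
    exact le_of_pow_le_pow_left₀ (Nat.pos_iff_ne_zero.mp hd) (by positivity) h2
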